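/- There exists a finite simple graph G on 11 vertices with two longest paths P and Q of length 9 such that V(P) ≠ V(Q), |V(P) ∩ V(Q)| = 9, and the complement of V(P) ∩ V(Q) in G is connected (so V(P) ∩ V(Q) is not a separator). -/

import Mathlib

open SimpleGraph

/-- `p` is a longest path in `G`: it is a path and no path in `G` is longer. -/
def IsLongestPath {V : Type} (G : SimpleGraph V) {u v : V} (p : G.Walk u v) : Prop :=
  p.IsPath ∧ ∀ ⦃a b : V⦄ (q : G.Walk a b), q.IsPath → q.length ≤ p.length

/-- Adjacency lists of the counterexample graph. -/
def nbrs : Fin 11 → List (Fin 11)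
  | 0 => [4,7,8,9,10]
  | 1 => [4,8]
  | 2 => [4,5,10]
  | 3 => [5,8,9]
  | 4 => [0,1,2,9]
  | 5 => [2,3,6]
  | 6 => [5]
  | 7 => [0]
  | 8 => [0,1,3,10]
  | 9 => [0,3,4]
  | 10 => [0,2,8]

def G11 : SimpleGraph (Fin 11) where
  Adj x y := y ∈ nbrs x
  symm := ⟨fun x y h => by
    have key : ∀ x y : Fin 11, y ∈ nbrs x → x ∈ nbrs y := by decide
    exact key x y h⟩
  loopless := ⟨fun x => by
    have key : ∀ x : Fin 11, x ∉ nbrs x := by decide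
    exact key x⟩

instance : DecidableRel G11.Adj := fun a b => inferInstanceAs (Decidable (b ∈ nbrs a))

/-- Bounded DFS: is there a simple-path extension of length `n` from `v` avoiding `vis`? -/
def ext : List (Fin 11) → Fin 11 → ℕ → Bool
  | _, _, 0 => true
  | vis, v, (n+1) => (nbrs v).any fun w => !vis.contains w && ext (w :: vis) w n

lemma ext_sound : ∀ {v t : Fin 11} (q : G11.Walk v t) (vis : List (Fin 11)),
    q.IsPath → (∀ x ∈ q.support.tail, x ∉ vis) → ext vis v q.length = true := by
  intro v t q
  induction q with
  | nil => intro vis _ _; rfl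
  | @cons v w t hadj q ih =>
    intro vis hp hd
    have hq : q.IsPath := hp.of_cons
    have hwv : w ∈ nbrs v := hadj
    have hwvis : w ∉ vis := hd w (by simp [Walk.support_cons, q.start_mem_support])
    have hnodup : q.support.Nodup := hq.support_nodup
    have htail : ∀ x ∈ q.support.tail, x ∉ (w :: vis) := by
      intro x hx
      have hx' : x ∈ q.support := by
        rw [q.support_eq_cons]; exact List.mem_cons_of_mem _ hx
      have hxw : x ≠ w := by
        intro h; subst h
        have h2 := q.support_eq_cons
        rw [h2] at hnodup
        exact (List.nodup_cons.mp hnodup).1 hx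
      have hxvis : x ∉ vis := hd x (by simpa [Walk.support_cons] using hx')
      simp [hxw, hxvis]
    have hrec := ih (w :: vis) hq htail
    show ext vis v (q.length + 1) = true
    rw [show ext vis v (q.length + 1)
        = (nbrs v).any (fun u => !vis.contains u && ext (u :: vis) u q.length) from rfl]
    rw [List.any_eq_true]
    exact ⟨w, hwv, by simp [hwvis, hrec]⟩

lemma no_ham : ∀ a : Fin 11, ext [a] a 10 = false := by decide

lemma path_len_le {a b : Fin 11} (q : G11.Walk a b) (hq : q.IsPath) : q.length ≤ 9 := by
  have h11 : q.length < 11 := by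
    have := hq.length_lt
    simpa using this
  by_contra h
  have h10 : q.length = 10 := by omega
  have hd : ∀ x ∈ q.support.tail, x ∉ ([a] : List (Fin 11)) := by
    intro x hx
    have hnodup := hq.support_nodup
    rw [q.support_eq_cons, List.nodup_cons] at hnodup
    simp only [List.mem_singleton]
    intro hxa; subst hxa; exact hnodup.1 hx
  have hs := ext_sound q [a] hq hd
  rw [h10, no_ham a] at hs
  exact absurd hs (by simp)

def P : G11.Walk 6 7 :=
  Walk.cons (show G11.Adj 6 5 by decide) (Walk.cons (show G11.Adj 5 3 by decide) (Walk.cons (show G11.Adj 3 9 by decide) (Walk.cons (show G11.Adj 9 4 by decide) (Walk.cons (show G11.Adj 4 1 by decide) (Walk.cons (show G11.Adj 1 8 by decide) (Walk.cons (show G11.Adj 8 10 by decide) (Walk.cons (show G11.Adj 10 0 by decide) (Walk.cons (show G11.Adj 0 7 by decide) (.nil)))))))))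

def Q : G11.Walk 6 7 :=
  Walk.cons (show G11.Adj 6 5 by decide) (Walk.cons (show G11.Adj 5 2 by decide) (Walk.cons (show G11.Adj 2 4 by decide) (Walk.cons (show G11.Adj 4 1 by decide) (Walk.cons (show G11.Adj 1 8 by decide) (Walk.cons (show G11.Adj 8 3 by decide) (Walk.cons (show G11.Adj 3 9 by decide) (Walk.cons (show G11.Adj 9 0 by decide) (Walk.cons (show G11.Adj 0 7 by decide) (.nil)))))))))

lemma P_support : P.support = [6,5,3,9,4,1,8,10,0,7] := rfl
lemma Q_support : Q.support = [6,5,2,4,1,8,3,9,0,7] := rfl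

lemma P_isPath : P.IsPath := by rw [Walk.isPath_def, P_support]; decide
lemma Q_isPath : Q.IsPath := by rw [Walk.isPath_def, Q_support]; decide

theorem eleven_vertex_counterexample :
    ∃ (G : SimpleGraph (Fin 11)) (u v c d : Fin 11)
      (p : G.Walk u v) (q : G.Walk c d),
      IsLongestPath G p ∧ IsLongestPath G q ∧
      p.length = 9 ∧ q.length = 9 ∧
      {x | x ∈ p.support} ≠ {x | x ∈ q.support} ∧
      (p.support.toFinset ∩ q.support.toFinset).card = 9 ∧
      (G.induce {x | ¬ (x ∈ p.support ∧ x ∈ q.support)}).Connected := by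
  refine ⟨G11, 6, 7, 6, 7, P, Q, ⟨P_isPath, ?_⟩, ⟨Q_isPath, ?_⟩, rfl, rfl, ?_, ?_, ?_⟩
  · intro a b q hq; exact (path_len_le q hq).trans_eq rfl
  · intro a b q hq; exact (path_len_le q hq).trans_eq rfl
  · intro h
    have h2 : (2 : Fin 11) ∈ {x | x ∈ P.support} ↔ (2 : Fin 11) ∈ {x | x ∈ Q.support} := by
      rw [h]
    rw [P_support, Q_support] at h2
    simp only [Set.mem_setOf_eq] at h2
    exact absurd (h2.mpr (by decide)) (by decide)
  · rw [P_support, Q_support]; decide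
  · have hset : {x : Fin 11 | ¬ (x ∈ P.support ∧ x ∈ Q.support)} = {2, 10} := by
      ext x
      rw [P_support, Q_support]
      simp only [Set.mem_setOf_eq, Set.mem_insert_iff, Set.mem_singleton_iff]
      fin_cases x <;> decide
    rw [hset]
    rw [connected_iff]
    refine ⟨?_, ⟨⟨2, by simp⟩⟩⟩
    rintro ⟨x, hx⟩ ⟨y, hy⟩
    have hadj : G11.Adj 2 10 := by decide
    have key : ∀ (x : Fin 11) (hx : x ∈ ({2, 10} : Set (Fin 11))) (y : Fin 11)
        (hy : y ∈ ({2, 10} : Set (Fin 11))),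
        (G11.induce ({2, 10} : Set (Fin 11))).Reachable ⟨x, hx⟩ ⟨y, hy⟩ := by
      intro x hx y hy
      rcases hx with rfl | hx <;> rcases hy with rfl | hy
      · rfl
      · rw [Set.mem_singleton_iff] at hy; subst hy
        exact Adj.reachable (by simp only [comap_adj, Function.Embedding.coe_subtype]; exact hadj)
      · rw [Set.mem_singleton_iff] at hx; subst hx
        exact Adj.reachable (by simp only [comap_adj, Function.Embedding.coe_subtype]; exact hadj.symm)
      · rw [Set.mem_singleton_iff] at hx hy; subst hx; subst hy; rfl
    exact key x hx y hy
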